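/- Let n be a positive integer and a₀ a nonzero complex number. Let p be analytic on the open unit disk 𝔻 = {z ∈ ℂ : |z| < 1} with p(0) = a₀ and with vanishing Taylor coefficients of orders 1, …, n−1 at 0 (i.e. the k-th derivative of p at 0 is 0 for all 1 ≤ k ≤ n−1), and suppose p(z) ≠ 0 for all z ∈ 𝔻. Suppose there exists a point z₀ ∈ 𝔻 with z₀ ≠ 0 and |p(z₀)| < |a₀| such that |p(z₀)| = min over the closed disk {z : |z| ≤ |z₀|} of |p(z)|. Then the quantity z₀·p'(z₀)/p(z₀) equals −m for some real number m satisfying m ≥ n·|a₀ − p(z₀)|² / (|a₀|² − |p(z₀)|²), and moreover Re( z₀·p''(z₀)/p'(z₀) ) + 1 ≥ −m. -/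

import Mathlib

open Metric


open Metric Complex Filter Set Function Topology

/-- derivative of `normSq ∘ v` for `v : ℝ → ℂ`. -/
lemma hasDerivAt_normSq_comp {v : ℝ → ℂ} {v' : ℂ} {t : ℝ}
    (hv : HasDerivAt v v' t) :
    HasDerivAt (fun θ => Complex.normSq (v θ))
      (2 * ((v t).re * v'.re + (v t).im * v'.im)) t := by
  have hre : HasDerivAt (fun θ => (v θ).re) v'.re t :=
    Complex.reCLM.hasFDerivAt.comp_hasDerivAt t hv
  have him : HasDerivAt (fun θ => (v θ).im) v'.im t :=
    Complex.imCLM.hasFDerivAt.comp_hasDerivAt t hv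
  have h2 := (hre.mul hre).add (him.mul him)
  have heq : (fun θ => Complex.normSq (v θ))
      = fun θ => (v θ).re * (v θ).re + (v θ).im * (v θ).im := by
    funext θ; simp [Complex.normSq_apply]
  rw [heq]
  exact h2.congr_deriv (by ring)

/-- Second derivative test: if `g` has minimum at `0`, derivative `g'` everywhere,
and `g'` has derivative `L` at `0`, then `L ≥ 0`. -/
lemma second_deriv_test {g g' : ℝ → ℝ} {L : ℝ}
    (hg : ∀ t, HasDerivAt g (g' t) t)
    (hL : HasDerivAt g' L 0)
    (hm : ∀ t, g 0 ≤ g t) : 0 ≤ L := by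
  by_contra hneg
  push_neg at hneg
  have hg'0 : g' 0 = 0 := by
    have hloc : IsLocalMin g 0 := Filter.Eventually.of_forall hm
    have := hloc.deriv_eq_zero
    rwa [(hg 0).deriv] at this
  have hslope : Tendsto (slope g' 0) (𝓝[≠] 0) (𝓝 L) :=
    hasDerivAt_iff_tendsto_slope.mp hL
  have hslope' : Tendsto (slope g' 0) (𝓝[>] 0) (𝓝 L) :=
    hslope.mono_left (nhdsWithin_mono _ (fun x hx => ne_of_gt hx))
  have hev : ∀ᶠ t in 𝓝[>] (0:ℝ), slope g' 0 t < L/2 :=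
    hslope'.eventually_lt_const (by linarith)
  rw [eventually_nhdsWithin_iff] at hev
  obtain ⟨ε, hεpos, hε⟩ := Metric.eventually_nhds_iff.mp hev
  set δ := ε/2 with hδ
  have hδpos : 0 < δ := by positivity
  have hg'neg : ∀ x ∈ Ioo (0:ℝ) δ, g' x < 0 := by
    intro x hx
    have hdist : dist x 0 < ε := by
      rw [Real.dist_eq, sub_zero, abs_of_pos hx.1]
      linarith [hx.2]
    have := hε hdist hx.1
    rw [slope_def_field, hg'0, sub_zero, sub_zero, div_eq_mul_inv] at this
    have hxinv : 0 < x⁻¹ := inv_pos.mpr hx.1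
    nlinarith [hx.1]
  have hdiff : Differentiable ℝ g := fun t => (hg t).differentiableAt
  have hanti : StrictAntiOn g (Icc 0 δ) := by
    apply strictAntiOn_of_deriv_neg (convex_Icc 0 δ) (hdiff.continuous.continuousOn)
    intro x hx
    rw [interior_Icc] at hx
    rw [(hg x).deriv]
    exact hg'neg x hx
  have : g δ < g 0 := hanti (left_mem_Icc.mpr hδpos.le) (right_mem_Icc.mpr hδpos.le) hδpos
  exact absurd (hm δ) (not_le.mpr this)

/-- Factor out `z^n` from an analytic function whose derivatives up to `n-1` vanish at `0`. -/
lemma factor_pow {f : ℂ → ℂ} {s : Set ℂ} (hs : IsOpen s) (h0 : (0:ℂ) ∈ s)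
    (hf : DifferentiableOn ℂ f s) (n : ℕ)
    (hv : ∀ k, k < n → iteratedDeriv k f 0 = 0) :
    ∃ g : ℂ → ℂ, DifferentiableOn ℂ g s ∧ ∀ z ∈ s, f z = z ^ n * g z := by
  have han : AnalyticOnNhd ℂ f s := hf.analyticOnNhd hs
  obtain ⟨P, hP⟩ := han 0 h0
  -- coefficients vanish
  have hcoeff : ∀ k, k < n → P.coeff k = 0 := by
    intro k hk
    obtain ⟨r, hball⟩ := hP
    have h1 := hball.factorial_smul (1:ℂ) k
    have h2 : iteratedFDeriv ℂ k f 0 (fun _ => (1:ℂ)) = iteratedDeriv k f 0 := by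
      rw [iteratedDeriv_eq_iteratedFDeriv]
    rw [h2, hv k hk] at h1
    have h3 : (k.factorial : ℂ) * P.coeff k = 0 := by
      rw [← nsmul_eq_mul]; exact h1
    have h4 : (k.factorial : ℂ) ≠ 0 := Nat.cast_ne_zero.mpr (Nat.factorial_ne_zero k)
    exact (mul_eq_zero.mp h3).resolve_left h4
  -- iterated dslope
  set g : ℕ → ℂ → ℂ := fun j => (Function.swap dslope 0)^[j] f with hgdef
  have hgpow : ∀ j, HasFPowerSeriesAt (g j) (FormalMultilinearSeries.fslope^[j] P) 0 :=
    fun j => hP.has_fpower_series_iterate_dslope_fslope j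
  have hsucc : ∀ j, g (j+1) = dslope (g j) 0 := by
    intro j; rw [hgdef]; simp only [Function.iterate_succ_apply']
  have hgdiff : ∀ j, ∀ z ∈ s, DifferentiableAt ℂ (g j) z := by
    intro j
    induction j with
    | zero => exact fun z hz => (hf.differentiableAt (hs.mem_nhds hz))
    | succ j ih =>
      intro z hz
      rcases eq_or_ne z 0 with rfl | hne
      · exact (hgpow (j+1)).analyticAt.differentiableAt
      · rw [hsucc j]
        exact (differentiableAt_dslope_of_ne hne).mpr (ih z hz)
  have hg0 : ∀ j, j < n → g j 0 = 0 := by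
    intro j hj
    have h1 := (hgpow j).coeff_zero (fun _ => (1:ℂ))
    have h2 : (FormalMultilinearSeries.fslope^[j] P).coeff 0 = P.coeff j := by
      simp [FormalMultilinearSeries.coeff_iterate_fslope]
    have h3 : (FormalMultilinearSeries.fslope^[j] P) 0 (fun _ => (1:ℂ))
        = (FormalMultilinearSeries.fslope^[j] P).coeff 0 := rfl
    rw [h3, h2] at h1
    rw [← h1, hcoeff j hj]
  have hf0 : 0 < n → f 0 = 0 := by
    intro hn
    have := hv 0 hn
    simpa [iteratedDeriv_zero] using this
  have hid : ∀ j, j ≤ n → ∀ z ∈ s, f z = z ^ j * g j z := by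
    intro j
    induction j with
    | zero => intro _ z _; simp [hgdef]
    | succ j ih =>
      intro hj z hz
      rcases eq_or_ne z 0 with rfl | hne
      · rw [hf0 (lt_of_lt_of_le (Nat.succ_pos j) hj)]
        simp
      · have h1 := ih (Nat.le_of_succ_le hj) z hz
        have h2 : g (j+1) z = g j z / z := by
          rw [hsucc j, dslope_of_ne _ hne, slope_def_field, hg0 j hj, sub_zero, sub_zero]
        rw [h2, h1]
        field_simp
        ring
  exact ⟨g n, fun z hz => (hgdiff n z hz).differentiableWithinAt, hid n le_rfl⟩

set_option maxHeartbeats 1600000 in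
/-- Shiraishi–Owa lemma: if `p ∈ ℋ[a₀, n]` is nonvanishing on the unit disk and `|p|`
attains its minimum over the closed disk `|z| ≤ |z₀|` at `z₀`, then
`z₀ p'(z₀)/p(z₀) = -m` with `m ≥ n |a₀ - p(z₀)|² / (|a₀|² - |p(z₀)|²)` and
`Re(z₀ p''(z₀)/p'(z₀)) + 1 ≥ -m`. -/
theorem shiraishi_owa_min_principle
    (n : ℕ) (hn : 0 < n) (a₀ : ℂ) (ha₀ : a₀ ≠ 0)
    (p : ℂ → ℂ)
    (hp : DifferentiableOn ℂ p (ball (0 : ℂ) 1))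
    (hp0 : p 0 = a₀)
    (hder : ∀ k : ℕ, 1 ≤ k → k ≤ n - 1 → iteratedDeriv k p 0 = 0)
    (hne : ∀ z ∈ ball (0 : ℂ) 1, p z ≠ 0)
    (z₀ : ℂ) (hz₀ : z₀ ∈ ball (0 : ℂ) 1) (hz₀ne : z₀ ≠ 0)
    (hlt : ‖p z₀‖ < ‖a₀‖)
    (hmin : ∀ z ∈ closedBall (0 : ℂ) (‖z₀‖),
      ‖p z₀‖ ≤ ‖p z‖) :
    ∃ m : ℝ,
      m ≥ (n : ℝ) * ‖a₀ - p z₀‖ ^ 2 /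
        (‖a₀‖ ^ 2 - ‖p z₀‖ ^ 2) ∧
      z₀ * deriv p z₀ / p z₀ = -(m : ℂ) ∧
      (z₀ * deriv (deriv p) z₀ / deriv p z₀).re + 1 ≥ -m := by
  have hz₀1 : ‖z₀‖ < 1 := by simpa [Complex.dist_eq] using mem_ball.mp hz₀
  set a : ℂ := p z₀ with ha_def
  set b : ℂ := deriv p z₀ with hb_def
  set c2 : ℂ := deriv (deriv p) z₀ with hc2_def
  have ha : a ≠ 0 := hne z₀ hz₀
  have haa : ‖a‖ < ‖a₀‖ := hlt
  have hane : a₀ - a ≠ 0 := by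
    intro h
    rw [sub_eq_zero] at h
    rw [← h] at haa
    exact lt_irrefl _ haa
  have hpa : AnalyticOnNhd ℂ p (ball (0:ℂ) 1) := hp.analyticOnNhd isOpen_ball
  have hpd' : AnalyticOnNhd ℂ (deriv p) (ball (0:ℂ) 1) := hpa.deriv
  -- the circle curve
  set inner : ℝ → ℂ := fun θ => z₀ * Complex.exp (θ * Complex.I) with hinner_def
  have habs_inner : ∀ θ : ℝ, ‖inner θ‖ = ‖z₀‖ := by
    intro θ
    simp [hinner_def, map_mul, Complex.norm_exp_ofReal_mul_I]
  have hinner_ball : ∀ θ : ℝ, inner θ ∈ ball (0:ℂ) 1 := by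
    intro θ
    simp only [mem_ball, Complex.dist_eq, sub_zero]
    rw [habs_inner θ]; exact hz₀1
  have hinner_cball : ∀ θ : ℝ, inner θ ∈ closedBall (0:ℂ) (‖z₀‖) := by
    intro θ
    simp only [mem_closedBall, Complex.dist_eq, sub_zero]
    rw [habs_inner θ]
  have hinner0 : inner 0 = z₀ := by simp [hinner_def]
  -- derivative of the inner curve (complex version, then restricted)
  have hinner_d : ∀ θ : ℝ, HasDerivAt inner (z₀ * Complex.exp (θ * Complex.I) * Complex.I) θ := by
    intro θ
    have h1 : HasDerivAt (fun ζ : ℂ => z₀ * Complex.exp (ζ * Complex.I))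
        (z₀ * Complex.exp ((θ:ℂ) * Complex.I) * Complex.I) (θ:ℂ) := by
      have h2 : HasDerivAt (fun ζ : ℂ => ζ * Complex.I) ((1:ℂ) * Complex.I) (θ:ℂ) :=
        (hasDerivAt_id _).mul_const Complex.I
      have h3 := h2.cexp.const_mul z₀
      refine h3.congr_deriv ?_
      ring
    exact h1.comp_ofReal
  set v : ℝ → ℂ := fun θ => p (inner θ) with hv_def
  set V : ℝ → ℂ := fun θ => deriv p (inner θ) * (z₀ * Complex.exp (θ * Complex.I) * Complex.I)
    with hV_def
  have hv_d : ∀ θ : ℝ, HasDerivAt v (V θ) θ := by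
    intro θ
    have h1 : HasDerivAt (fun ζ : ℂ => p (z₀ * Complex.exp (ζ * Complex.I)))
        (deriv p (inner θ) * (z₀ * Complex.exp ((θ:ℂ) * Complex.I) * Complex.I)) (θ:ℂ) := by
      have h2 : HasDerivAt (fun ζ : ℂ => z₀ * Complex.exp (ζ * Complex.I))
          (z₀ * Complex.exp ((θ:ℂ) * Complex.I) * Complex.I) (θ:ℂ) := by
        have h3 : HasDerivAt (fun ζ : ℂ => ζ * Complex.I) ((1:ℂ) * Complex.I) (θ:ℂ) :=
          (hasDerivAt_id _).mul_const Complex.I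
        have h4 := h3.cexp.const_mul z₀
        refine h4.congr_deriv ?_
        ring
      have hpd : HasDerivAt p (deriv p (inner θ)) (inner θ) :=
        ((hp.differentiableAt (isOpen_ball.mem_nhds (hinner_ball θ))).hasDerivAt)
      have := hpd.comp (θ:ℂ) h2
      exact this
    exact h1.comp_ofReal
  set ψ : ℝ → ℝ := fun θ => Complex.normSq (v θ) with hψ_def
  set ψ₁ : ℝ → ℝ := fun θ => 2 * ((v θ).re * (V θ).re + (v θ).im * (V θ).im) with hψ₁_def
  have hψ_d : ∀ θ : ℝ, HasDerivAt ψ (ψ₁ θ) θ := fun θ => hasDerivAt_normSq_comp (hv_d θ)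
  have hv0 : v 0 = a := by simp [hv_def, hinner0, ha_def]
  have hψmin : ∀ θ : ℝ, ψ 0 ≤ ψ θ := by
    intro θ
    have h1 : ‖a‖ ≤ ‖p (inner θ)‖ := hmin _ (hinner_cball θ)
    simp only [hψ_def, hv_def, hinner0]
    rw [Complex.normSq_eq_norm_sq, Complex.normSq_eq_norm_sq]
    exact pow_le_pow_left₀ (norm_nonneg _) h1 2
  have hψ10 : ψ₁ 0 = 0 := by
    have hloc : IsLocalMin ψ 0 := Filter.Eventually.of_forall hψmin
    have h1 := hloc.deriv_eq_zero
    rw [(hψ_d 0).deriv] at h1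
    exact h1
  have hV0 : V 0 = z₀ * b * Complex.I := by
    simp only [hV_def, hinner0]
    rw [show ((0:ℝ):ℂ) * Complex.I = 0 by simp]
    rw [Complex.exp_zero]
    ring
  -- realness of z₀ b / a
  have him0 : (z₀ * b).im * a.re - (z₀ * b).re * a.im = 0 := by
    have h1 := hψ10
    rw [hψ₁_def] at h1
    simp only [hv0, hV0] at h1
    simp only [Complex.mul_re, Complex.mul_im, Complex.I_re, Complex.I_im] at h1 ⊢
    ring_nf at h1 ⊢
    linarith
  set m : ℝ := -((z₀ * b / a).re) with hm_def
  have hμim : (z₀ * b / a).im = 0 := by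
    rw [Complex.div_im, div_sub_div_same, div_eq_zero_iff]
    left
    linarith [him0]
  have hμm : z₀ * b / a = -(m : ℂ) := by
    have h0 : z₀ * b / a = ((z₀ * b / a).re : ℂ) := by
      apply Complex.ext
      · simp
      · simp [hμim]
    rw [h0, hm_def]
    push_cast
    ring
  have hzb : z₀ * b = -(m:ℂ) * a := by
    rw [← hμm, div_mul_cancel₀ _ ha]
  clear_value m
  -- second derivative of ψ at 0
  have hd1 : HasDerivAt (fun θ : ℝ => deriv p (inner θ)) (c2 * (z₀ * Complex.I)) 0 := by
    have h1 : HasDerivAt (fun ζ : ℂ => deriv p (z₀ * Complex.exp (ζ * Complex.I)))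
        (c2 * (z₀ * Complex.I)) ((0:ℝ):ℂ) := by
      have h2 : HasDerivAt (fun ζ : ℂ => z₀ * Complex.exp (ζ * Complex.I))
          (z₀ * Complex.exp (((0:ℝ):ℂ) * Complex.I) * Complex.I) (((0:ℝ):ℂ)) := by
        have h3 : HasDerivAt (fun ζ : ℂ => ζ * Complex.I) ((1:ℂ) * Complex.I) (((0:ℝ):ℂ)) :=
          (hasDerivAt_id _).mul_const Complex.I
        have h4 := h3.cexp.const_mul z₀
        refine h4.congr_deriv ?_
        ring
      have hpd : HasDerivAt (deriv p) c2 z₀ :=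
        ((hpd' z₀ hz₀).differentiableAt.hasDerivAt)
      have h5 : (fun ζ : ℂ => z₀ * Complex.exp (ζ * Complex.I)) ((0:ℝ):ℂ) = z₀ := by
        simp
      rw [← h5] at hpd
      have h6 := hpd.comp (((0:ℝ):ℂ)) h2
      refine h6.congr_deriv ?_
      simp
    exact h1.comp_ofReal
  have hd2 : HasDerivAt (fun θ : ℝ => z₀ * Complex.exp (θ * Complex.I) * Complex.I)
      (z₀ * Complex.I * Complex.I) 0 := by
    have h1 := (hinner_d 0).mul_const Complex.I
    refine h1.congr_deriv ?_
    rw [show ((0:ℝ):ℂ) * Complex.I = 0 by simp, Complex.exp_zero]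
    ring
  set Y : ℂ := c2 * (z₀ * Complex.I) * (z₀ * Complex.I) + b * (z₀ * Complex.I * Complex.I)
    with hY_def
  have hV_d : HasDerivAt V Y 0 := by
    have h1 := hd1.mul hd2
    refine h1.congr_deriv ?_
    rw [hY_def]
    simp only [hinner0]
    rw [show ((0:ℝ):ℂ) * Complex.I = 0 by simp, Complex.exp_zero]
    ring
  set L : ℝ := 2 * ((V 0).re * (V 0).re + (v 0).re * Y.re +
      ((V 0).im * (V 0).im + (v 0).im * Y.im)) with hL_def
  have hψ₁_d : HasDerivAt ψ₁ L 0 := by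
    have hvre : HasDerivAt (fun θ => (v θ).re) (V 0).re 0 :=
      Complex.reCLM.hasFDerivAt.comp_hasDerivAt 0 (hv_d 0)
    have hvim : HasDerivAt (fun θ => (v θ).im) (V 0).im 0 :=
      Complex.imCLM.hasFDerivAt.comp_hasDerivAt 0 (hv_d 0)
    have hVre : HasDerivAt (fun θ => (V θ).re) Y.re 0 :=
      Complex.reCLM.hasFDerivAt.comp_hasDerivAt 0 hV_d
    have hVim : HasDerivAt (fun θ => (V θ).im) Y.im 0 :=
      Complex.imCLM.hasFDerivAt.comp_hasDerivAt 0 hV_d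
    have h1 := (((hvre.mul hVre).add (hvim.mul hVim)).const_mul (2:ℝ))
    exact h1
  have hLpos : 0 ≤ L := second_deriv_test hψ_d hψ₁_d hψmin
  -- derive the key inequality
  have hY2 : Y = -(z₀ * (z₀ * c2)) + (m:ℂ) * a := by
    rw [hY_def]
    linear_combination (c2 * z₀ ^ 2 + b * z₀) * Complex.I_mul_I - hzb
  have hstar : ((starRingEnd ℂ) a * (z₀ * (z₀ * c2))).re ≤ (m^2 + m) * Complex.normSq a := by
    have h1 : (V 0).re * (V 0).re + (V 0).im * (V 0).im = m^2 * Complex.normSq a := by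
      rw [hV0]
      have : z₀ * b * Complex.I = -(m:ℂ) * a * Complex.I := by rw [hzb]
      rw [this]
      simp [Complex.normSq_apply, Complex.mul_re, Complex.mul_im]
      ring
    have h2 : (v 0).re * Y.re + (v 0).im * Y.im
        = -((starRingEnd ℂ) a * (z₀ * (z₀ * c2))).re + m * Complex.normSq a := by
      rw [hv0, hY2]
      simp [Complex.normSq_apply, Complex.mul_re, Complex.mul_im, Complex.conj_re,
        Complex.conj_im, Complex.add_re, Complex.add_im, Complex.neg_re, Complex.neg_im]
      ring
    rw [hL_def] at hLpos
    nlinarith [hLpos, h1, h2]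
  -- Part II : the auxiliary self-map u
  set N : ℝ := Complex.normSq a with hN_def
  have hNpos : 0 < N := Complex.normSq_pos.mpr ha
  have hNlt : N < Complex.normSq a₀ := by
    rw [hN_def, ← Complex.sq_norm, ← Complex.sq_norm]
    exact pow_lt_pow_left₀ haa (norm_nonneg _) two_ne_zero
  have hconj_ne : (starRingEnd ℂ) (a₀ - a) ≠ 0 := by
    intro h
    exact hane ((starRingEnd ℂ).injective (by simpa using h))
  set A0 : ℂ := (starRingEnd ℂ) a₀ with hA0_def
  set D : ℂ → ℂ := fun z => A0 * p (z₀ * z) - (N : ℂ) with hD_def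
  set C : ℂ := a * (starRingEnd ℂ) (a₀ - a) / (a₀ - a) with hC_def
  set u : ℂ → ℂ := fun z => C * (a₀ - p (z₀ * z)) / D z with hu_def
  have hmem_cb : ∀ z ∈ closedBall (0:ℂ) 1, z₀ * z ∈ closedBall (0:ℂ) (‖z₀‖) := by
    intro z hz
    simp only [mem_closedBall, Complex.dist_eq, sub_zero] at hz ⊢
    rw [norm_mul]
    calc ‖z₀‖ * ‖z‖ ≤ ‖z₀‖ * 1 :=
          mul_le_mul_of_nonneg_left hz (norm_nonneg _)
      _ = ‖z₀‖ := mul_one _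
  have hmem_b : ∀ z ∈ closedBall (0:ℂ) 1, z₀ * z ∈ ball (0:ℂ) 1 := by
    intro z hz
    have h1 := hmem_cb z hz
    simp only [mem_closedBall, mem_ball, Complex.dist_eq, sub_zero] at h1 ⊢
    exact lt_of_le_of_lt h1 hz₀1
  have hPlb : ∀ z ∈ closedBall (0:ℂ) 1, ‖a‖ ≤ ‖p (z₀ * z)‖ :=
    fun z hz => hmin _ (hmem_cb z hz)
  have hDne : ∀ z ∈ closedBall (0:ℂ) 1, D z ≠ 0 := by
    intro z hz hD0
    rw [hD_def] at hD0
    have h1 : A0 * p (z₀ * z) = (N : ℂ) := by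
      have := sub_eq_zero.mp hD0
      exact this
    have h2 := congrArg (‖·‖) h1
    rw [norm_mul] at h2
    have h3 : ‖A0‖ = ‖a₀‖ := Complex.norm_conj a₀
    have h4 : ‖(N:ℂ)‖ = N := by
      rw [Complex.norm_real, Real.norm_eq_abs, abs_of_pos hNpos]
    rw [h3, h4] at h2
    have h5 := hPlb z hz
    have h6 : N = ‖a‖ ^ 2 := (Complex.sq_norm a).symm
    have hapos : 0 < ‖a‖ := norm_pos_iff.mpr ha
    nlinarith [mul_le_mul_of_nonneg_left h5 (norm_nonneg a₀),
      mul_lt_mul_of_pos_right haa hapos]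
  have hu_bound : ∀ z ∈ closedBall (0:ℂ) 1, ‖u z‖ ≤ 1 := by
    intro z hz
    have hkey : Complex.normSq (D z) - Complex.normSq a * Complex.normSq (a₀ - p (z₀ * z))
        = (Complex.normSq a₀ - N) * (Complex.normSq (p (z₀ * z)) - N) := by
      rw [hD_def, hN_def, hA0_def]
      simp only [Complex.normSq_apply, Complex.mul_re, Complex.mul_im, Complex.sub_re,
        Complex.sub_im, Complex.conj_re, Complex.conj_im, Complex.ofReal_re, Complex.ofReal_im]
      ring
    have hP2 : Complex.normSq a ≤ Complex.normSq (p (z₀ * z)) := by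
      rw [← Complex.sq_norm, ← Complex.sq_norm]
      exact pow_le_pow_left₀ (norm_nonneg _) (hPlb z hz) 2
    have hDpos : 0 < Complex.normSq (D z) := Complex.normSq_pos.mpr (hDne z hz)
    have hnsq : Complex.normSq (u z) ≤ 1 := by
      rw [hu_def]
      simp only [Complex.normSq_div, Complex.normSq_mul]
      rw [div_le_one hDpos]
      have hC2 : Complex.normSq C = Complex.normSq a := by
        rw [hC_def]
        simp only [Complex.normSq_div, Complex.normSq_mul, Complex.normSq_conj]
        rw [mul_div_assoc, div_self (Complex.normSq_pos.mpr hane).ne']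
        exact mul_one _
      rw [hC2]
      nlinarith [hNlt, hP2, hNpos]
    rw [Complex.norm_def]
    exact Real.sqrt_le_one.mpr hnsq
  -- the domain of u
  set Om : Set ℂ := {z : ℂ | z₀ * z ∈ ball (0:ℂ) 1 ∧ D z ≠ 0} with hOm_def
  have hOmopen : IsOpen Om := by
    have h1 : IsOpen {z : ℂ | z₀ * z ∈ ball (0:ℂ) 1} :=
      isOpen_ball.preimage (continuous_const.mul continuous_id)
    have hcont : ContinuousOn D {z : ℂ | z₀ * z ∈ ball (0:ℂ) 1} := by
      rw [hD_def]
      apply ContinuousOn.sub _ continuousOn_const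
      apply ContinuousOn.mul continuousOn_const
      exact hp.continuousOn.comp ((continuous_const.mul continuous_id).continuousOn)
        (fun z hz => hz)
    have h2 := hcont.isOpen_inter_preimage h1 (isOpen_compl_singleton : IsOpen ({(0:ℂ)}ᶜ))
    have h3 : Om = {z : ℂ | z₀ * z ∈ ball (0:ℂ) 1} ∩ D ⁻¹' ({(0:ℂ)}ᶜ) := by
      ext z
      simp only [hOm_def, Set.mem_setOf_eq, Set.mem_inter_iff, Set.mem_preimage,
        Set.mem_compl_iff, Set.mem_singleton_iff]
    rw [h3]
    exact h2
  have hsubOm : closedBall (0:ℂ) 1 ⊆ Om := fun z hz => ⟨hmem_b z hz, hDne z hz⟩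
  have hPdiffOm : DifferentiableOn ℂ (fun z => p (z₀ * z)) Om :=
    hp.comp ((differentiable_id.const_mul z₀).differentiableOn) (fun z hz => hz.1)
  have hDdiff : DifferentiableOn ℂ D Om := by
    rw [hD_def]
    exact (hPdiffOm.const_mul A0).sub_const _
  have hu_diff : DifferentiableOn ℂ u Om := by
    rw [hu_def]
    exact (((differentiableOn_const a₀).sub hPdiffOm).const_mul C).div hDdiff
      (fun z hz => hz.2)
  -- factor p - a₀
  have hfd : DifferentiableOn ℂ (fun z => p z - a₀) (ball (0:ℂ) 1) := hp.sub_const a₀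
  have hfv : ∀ k, k < n → iteratedDeriv k (fun z => p z - a₀) 0 = 0 := by
    intro k hk
    cases k with
    | zero => rw [iteratedDeriv_zero]; simp [hp0]
    | succ j =>
      have hd : (deriv fun z => p z - a₀) = deriv p := by
        funext x
        exact deriv_sub_const a₀
      rw [iteratedDeriv_succ', hd, ← iteratedDeriv_succ']
      exact hder (j+1) (by omega) (by omega)
  obtain ⟨g, hg_diff, hg_eq⟩ := factor_pow isOpen_ball (mem_ball_self one_pos) hfd n hfv
  set v2 : ℂ → ℂ := fun z => -(C * (z₀ ^ n * g (z₀ * z))) / D z with hv2_def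
  have huv : ∀ z ∈ Om, u z = z ^ n * v2 z := by
    intro z hz
    have hPz : p (z₀ * z) - a₀ = (z₀ * z) ^ n * g (z₀ * z) := hg_eq (z₀ * z) hz.1
    simp only [hu_def, hv2_def]
    rw [← mul_div_assoc]
    have hnum : C * (a₀ - p (z₀ * z)) = z ^ n * -(C * (z₀ ^ n * g (z₀ * z))) := by
      linear_combination (-C) * hPz
    rw [hnum]
  have hv2_diff : DifferentiableOn ℂ v2 Om := by
    have hgz : DifferentiableOn ℂ (fun z => g (z₀ * z)) Om :=
      hg_diff.comp ((differentiable_id.const_mul z₀).differentiableOn) (fun z hz => hz.1)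
    rw [hv2_def]
    exact ((hgz.const_mul (z₀ ^ n)).const_mul C).neg.div hDdiff (fun z hz => hz.2)
  have hcl : closure (ball (0:ℂ) 1) = closedBall 0 1 := closure_ball 0 one_ne_zero
  have hv2_bound : ∀ z ∈ closedBall (0:ℂ) 1, ‖v2 z‖ ≤ 1 := by
    intro z hz
    have h0 : ‖v2 z‖ ≤ 1 := by
      apply Complex.norm_le_of_forall_mem_frontier_norm_le isBounded_ball
      · exact DifferentiableOn.diffContOnCl (by rw [hcl]; exact hv2_diff.mono hsubOm)
      · intro w hw
        rw [frontier_ball (0:ℂ) one_ne_zero] at hw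
        have hw1 : ‖w‖ = 1 := by simpa [Complex.dist_eq] using hw
        have hwcb : w ∈ closedBall (0:ℂ) 1 := by
          simp only [mem_closedBall, Complex.dist_eq, sub_zero]
          exact le_of_eq hw1
        have h2 := huv w (hsubOm hwcb)
        have h3 : ‖u w‖ = ‖w‖ ^ n * ‖v2 w‖ := by
          rw [h2, norm_mul, norm_pow]
        rw [hw1, one_pow, one_mul] at h3
        rw [← h3]
        exact hu_bound w hwcb
      · rw [hcl]; exact hz
    exact h0
  have hut : ∀ t : ℝ, t ∈ Set.Ioo (0:ℝ) 1 → Complex.normSq (u t) ≤ t ^ (2 * n) := by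
    intro t ht
    have htc : ((t:ℂ)) ∈ closedBall (0:ℂ) 1 := by
      simp only [mem_closedBall, Complex.dist_eq, sub_zero, Complex.norm_real, Real.norm_eq_abs]
      rw [abs_of_pos ht.1]
      exact le_of_lt ht.2
    have h1 := huv t (hsubOm htc)
    rw [h1, Complex.normSq_mul]
    have h2 : Complex.normSq ((t:ℂ) ^ n) = t ^ (2*n) := by
      rw [map_pow, Complex.normSq_ofReal]
      rw [show t * t = t^2 from (sq t).symm, ← pow_mul]
    have h3 : Complex.normSq (v2 ((t:ℂ))) ≤ 1 := by
      have h4 := hv2_bound t htc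
      rw [Complex.normSq_eq_norm_sq]
      nlinarith [norm_nonneg (v2 ((t:ℂ)))]
    rw [h2]
    have h5 := mul_le_mul_of_nonneg_left h3 (pow_nonneg (le_of_lt ht.1) (2*n))
    simpa using h5
  -- derivative of u at 1
  have h1cb : (1:ℂ) ∈ closedBall (0:ℂ) 1 := by simp
  have hD1 : D 1 = (starRingEnd ℂ) (a₀ - a) * a := by
    have h0 : D 1 = A0 * p (z₀ * 1) - (N : ℂ) := rfl
    rw [h0, mul_one, ← ha_def, hA0_def, hN_def, Complex.normSq_eq_conj_mul_self, map_sub]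
    ring
  have hD1ne : D 1 ≠ 0 := hDne 1 h1cb
  have hu1 : u 1 = 1 := by
    have h0 : u 1 = C * (a₀ - p (z₀ * 1)) / D 1 := rfl
    rw [h0, mul_one, ← ha_def, hD1, hC_def]
    rw [div_mul_cancel₀ _ hane, div_eq_one_iff_eq (mul_ne_zero hconj_ne ha)]
    ring
  have hpd : HasDerivAt p b z₀ := (hp.differentiableAt (isOpen_ball.mem_nhds hz₀)).hasDerivAt
  have hPd1 : HasDerivAt (fun z : ℂ => p (z₀ * z)) (b * z₀) 1 := by
    have hlin : HasDerivAt (fun z : ℂ => z₀ * z) z₀ 1 := by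
      simpa using (hasDerivAt_id (1:ℂ)).const_mul z₀
    have hpd' : HasDerivAt p b (z₀ * 1) := by rwa [mul_one]
    exact hpd'.comp 1 hlin
  have hDd1 : HasDerivAt D (A0 * (b * z₀)) 1 := (hPd1.const_mul A0).sub_const _
  have hNum_d : HasDerivAt (fun z : ℂ => C * (a₀ - p (z₀ * z))) (C * (0 - b * z₀)) 1 :=
    ((hasDerivAt_const 1 a₀).sub hPd1).const_mul C
  set U1 : ℂ := (C * (0 - b * z₀) * D 1 - C * (a₀ - p (z₀ * 1)) * (A0 * (b * z₀))) / D 1 ^ 2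
    with hU1_def
  have hu_d1 : HasDerivAt u U1 1 := hNum_d.div hDd1 hD1ne
  set ρ : ℝ := (Complex.normSq a₀ - N) / Complex.normSq (a₀ - a) with hρ_def
  have hnsqpos : 0 < Complex.normSq (a₀ - a) := Complex.normSq_pos.mpr hane
  have hρpos : 0 < ρ := div_pos (by linarith) hnsqpos
  have hbz : b * z₀ = -(m:ℂ) * a := by linear_combination hzb
  have hU1val : U1 = ((ρ * m : ℝ) : ℂ) := by
    rw [hU1_def, hbz, hD1, mul_one, ← ha_def, hρ_def, hN_def]
    push_cast
    rw [Complex.normSq_eq_conj_mul_self, Complex.normSq_eq_conj_mul_self,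
      Complex.normSq_eq_conj_mul_self, hA0_def, hC_def]
    have hca : (starRingEnd ℂ) a ≠ 0 := fun h => ha ((starRingEnd ℂ).injective (by simpa using h))
    have hconj_ne' : (starRingEnd ℂ) a₀ - (starRingEnd ℂ) a ≠ 0 := by
      rw [← map_sub]; exact hconj_ne
    simp only [map_sub]
    field_simp [ha, hane, hconj_ne']
    ring
  -- slope comparison along the real axis
  have hu_d1' : HasDerivAt u U1 (((1:ℝ):ℂ)) := by rwa [Complex.ofReal_one]
  have hud_real : HasDerivAt (fun t : ℝ => u t) U1 1 := hu_d1'.comp_ofReal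
  set gψ : ℝ → ℝ := fun t => Complex.normSq (u t) with hgψ_def
  have hut' : ∀ t : ℝ, t ∈ Set.Ioo (0:ℝ) 1 → gψ t ≤ t ^ (2*n) := hut
  have hgψ1 : gψ 1 = 1 := by
    have h0 : gψ 1 = Complex.normSq (u (((1:ℝ):ℂ))) := rfl
    rw [h0, Complex.ofReal_one, hu1]
    simp
  have hgψ_d : HasDerivAt gψ (2 * U1.re) 1 := by
    have h1 := hasDerivAt_normSq_comp hud_real
    have h2 : u (((1:ℝ):ℂ)) = 1 := by rw [Complex.ofReal_one, hu1]
    rw [h2] at h1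
    simpa using h1
  have hT1 : Filter.Tendsto (slope gψ 1) (nhdsWithin 1 (Set.Iio 1)) (nhds (2 * U1.re)) :=
    (hasDerivAt_iff_tendsto_slope.mp hgψ_d).mono_left
      (nhdsWithin_mono _ (fun x hx => ne_of_lt hx))
  have hpow_d : HasDerivAt (fun t:ℝ => t ^ (2*n)) (2*(n:ℝ)) 1 := by
    have h1 := hasDerivAt_pow (2*n) (1:ℝ)
    refine h1.congr_deriv ?_
    push_cast
    simp
  have hT2 : Filter.Tendsto (slope (fun t : ℝ => t ^ (2*n)) 1) (nhdsWithin 1 (Set.Iio 1))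
      (nhds (2*(n:ℝ))) :=
    (hasDerivAt_iff_tendsto_slope.mp hpow_d).mono_left
      (nhdsWithin_mono _ (fun x hx => ne_of_lt hx))
  have hcmp : ∀ᶠ t in nhdsWithin (1:ℝ) (Set.Iio 1),
      slope (fun t : ℝ => t ^ (2*n)) 1 t ≤ slope gψ 1 t := by
    filter_upwards [Ioo_mem_nhdsLT_of_mem (⟨zero_lt_one, le_refl 1⟩ : (1:ℝ) ∈ Set.Ioc 0 1)]
      with t ht
    rw [slope_def_field, slope_def_field]
    have h3 : t - 1 < 0 := by linarith [ht.2]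
    rw [div_le_div_right_of_neg h3]
    have h6 := hut' t ht
    rw [hgψ1, one_pow]
    linarith
  have hfin : 2*(n:ℝ) ≤ 2 * U1.re := le_of_tendsto_of_tendsto hT2 hT1 hcmp
  have hk : (n:ℝ) ≤ ρ * m := by
    have h1 : U1.re = ρ * m := by rw [hU1val, Complex.ofReal_re]
    linarith
  have hmpos : 0 < m := by
    by_contra hmle
    push_neg at hmle
    have h1 : ρ * m ≤ 0 := mul_nonpos_of_nonneg_of_nonpos hρpos.le hmle
    have h2 : (0:ℝ) < n := by exact_mod_cast hn
    linarith
  -- assemble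
  refine ⟨m, ?_, hμm, ?_⟩
  · rw [ge_iff_le, Complex.sq_norm, Complex.sq_norm, Complex.sq_norm, ← hN_def]
    rw [div_le_iff₀ (by linarith : (0:ℝ) < Complex.normSq a₀ - N)]
    have h2 : ρ * Complex.normSq (a₀ - a) = Complex.normSq a₀ - N := by
      rw [hρ_def]
      field_simp
    nlinarith [mul_le_mul_of_nonneg_right hk hnsqpos.le]
  · have hbne : b ≠ 0 := by
      intro hb0
      rw [hb0, mul_zero] at hzb
      exact (mul_ne_zero (neg_ne_zero.mpr (Complex.ofReal_ne_zero.mpr hmpos.ne')) ha) hzb.symm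
    have hq : z₀ * c2 / b = (z₀ * (z₀ * c2)) / (-(m:ℂ) * a) := by
      rw [← hzb, mul_div_mul_left _ _ hz₀ne]
    rw [hq, Complex.div_re]
    set x : ℂ := z₀ * (z₀ * c2) with hx_def
    have hw_nsq : Complex.normSq (-(m:ℂ) * a) = m^2 * N := by
      rw [Complex.normSq_mul, Complex.normSq_neg, Complex.normSq_ofReal, ← hN_def]
      ring
    have hwre : (-(m:ℂ) * a).re = -(m * a.re) := by simp
    have hwim : (-(m:ℂ) * a).im = -(m * a.im) := by simp
    rw [hw_nsq, hwre, hwim]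
    have hmN : 0 < m^2 * N := mul_pos (pow_pos hmpos 2) hNpos
    have hcomb : x.re * -(m * a.re) / (m ^ 2 * N) + x.im * -(m * a.im) / (m ^ 2 * N)
        = -(m * ((starRingEnd ℂ) a * x).re) / (m ^ 2 * N) := by
      rw [← add_div]
      congr 1
      simp only [Complex.mul_re, Complex.conj_re, Complex.conj_im]
      ring
    rw [hcomb]
    have h5 : -(m+1) ≤ -(m * ((starRingEnd ℂ) a * x).re) / (m^2*N) := by
      rw [le_div_iff₀ hmN]
      nlinarith [mul_le_mul_of_nonneg_left hstar hmpos.le]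
    linarith
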